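/- In the tangent Lie bialgebra of U(4) with cobracket δ(Hᵢ) = 0, δ(H) = 0, δ(Eᵢ) = Eᵢ∧Hᵢ, δ(Fᵢ) = Fᵢ∧Hᵢ, the diagonal su(2) spanned by {H₁+H₃, E₁+E₃, F₁+F₃} is not coisotropic: δ(su(2)^d) is not contained in su(2)^d ∧ u(4). -/

import Mathlib

open ExteriorAlgebra

noncomputable section

abbrev M4 := Matrix (Fin 4) (Fin 4) ℂ

/-- elementary matrices -/
noncomputable def elm (i j : Fin 4) : M4 := Matrix.single i j (1 : ℂ)

noncomputable def Hgen : Fin 3 → M4 := fun i =>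
  Complex.I • (elm i.castSucc i.castSucc - elm i.succ i.succ)
noncomputable def Egen : Fin 3 → M4 := fun i =>
  (2 * Complex.I)⁻¹ • (elm i.castSucc i.succ + elm i.succ i.castSucc)
noncomputable def Fgen : Fin 3 → M4 := fun i =>
  (2⁻¹ : ℂ) • (elm i.castSucc i.succ - elm i.succ i.castSucc)
noncomputable def Hc : M4 := Complex.I • (1 : M4)

/-- `ι x ∧ ι y` in the exterior algebra of `u(4)` (viewed inside all 4×4
complex matrices as a real vector space). -/
noncomputable def wedge (x y : M4) : ExteriorAlgebra ℝ M4 :=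
  ExteriorAlgebra.ι ℝ x * ExteriorAlgebra.ι ℝ y

/-- the diagonal su(2) -/
noncomputable def su2d : Submodule ℝ M4 :=
  Submodule.span ℝ {Hgen 0 + Hgen 2, Egen 0 + Egen 2, Fgen 0 + Fgen 2}

/-- `su(2)^d ∧ u(4)` inside `Λ² u(4)`. -/
noncomputable def A1 : M4 := elm 0 1 + elm 2 3
noncomputable def A2 : M4 := elm 0 2 - elm 1 3

lemma A1A1 : A1 * A1 = 0 := by
  ext i j
  fin_cases i <;> fin_cases j <;>
    simp [A1, elm, Matrix.mul_apply, Fin.sum_univ_four, Matrix.single]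

lemma A2A2 : A2 * A2 = 0 := by
  ext i j
  fin_cases i <;> fin_cases j <;>
    simp [A2, elm, Matrix.mul_apply, Fin.sum_univ_four, Matrix.single]

lemma A1A2 : A1 * A2 = -(elm 0 3) := by
  ext i j
  fin_cases i <;> fin_cases j <;>
    simp [A1, A2, elm, Matrix.mul_apply, Fin.sum_univ_four, Matrix.single]

lemma A2A1 : A2 * A1 = elm 0 3 := by
  ext i j
  fin_cases i <;> fin_cases j <;>
    simp [A1, A2, elm, Matrix.mul_apply, Fin.sum_univ_four, Matrix.single]

noncomputable def al : M4 →ₗ[ℝ] ℝ where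
  toFun x := (x 0 0).im - (x 2 2).im
  map_add' x y := by simp [Matrix.add_apply]; ring
  map_smul' r x := by simp [Matrix.smul_apply, Complex.smul_im]; ring

noncomputable def be : M4 →ₗ[ℝ] ℝ where
  toFun x := (x 0 1).im - (x 2 3).im
  map_add' x y := by simp [Matrix.add_apply]; ring
  map_smul' r x := by simp [Matrix.smul_apply, Complex.smul_im]; ring

noncomputable def fmap : M4 →ₗ[ℝ] M4 := al.smulRight A1 + be.smulRight A2

lemma fmap_apply (x : M4) : fmap x = al x • A1 + be x • A2 := rfl

lemma fmap_cond (x : M4) : fmap x * fmap x = 0 := by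
  rw [fmap_apply]
  simp only [add_mul, mul_add, smul_mul_assoc, mul_smul_comm, A1A1, A2A2, A1A2, A2A1,
    smul_neg, smul_zero, smul_smul]
  simp [smul_smul, mul_comm]


lemma cs2 : Fin.castSucc (2:Fin 3) = 2 := rfl
lemma s2 : Fin.succ (2:Fin 3) = 3 := rfl

lemma al_apply (x : M4) : al x = (x 0 0).im - (x 2 2).im := rfl
lemma be_apply (x : M4) : be x = (x 0 1).im - (x 2 3).im := rfl

lemma alH0 : al (Hgen 0) = 1 := by
  simp [al_apply, Hgen, elm, Matrix.single, Matrix.smul_apply, Matrix.sub_apply, cs2, s2]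
lemma alH2 : al (Hgen 2) = -1 := by
  simp [al_apply, Hgen, elm, Matrix.single, Matrix.smul_apply, Matrix.sub_apply, cs2, s2]
lemma alE0 : al (Egen 0) = 0 := by
  simp [al_apply, Egen, elm, Matrix.single, Matrix.smul_apply, Matrix.add_apply, cs2, s2]
lemma alE2 : al (Egen 2) = 0 := by
  simp [al_apply, Egen, elm, Matrix.single, Matrix.smul_apply, Matrix.add_apply, cs2, s2]
lemma alF0 : al (Fgen 0) = 0 := by
  simp [al_apply, Fgen, elm, Matrix.single, Matrix.smul_apply, Matrix.sub_apply, cs2, s2]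
lemma alF2 : al (Fgen 2) = 0 := by
  simp [al_apply, Fgen, elm, Matrix.single, Matrix.smul_apply, Matrix.sub_apply, cs2, s2]
lemma beH0 : be (Hgen 0) = 0 := by
  simp [be_apply, Hgen, elm, Matrix.single, Matrix.smul_apply, Matrix.sub_apply, cs2, s2]
lemma beH2 : be (Hgen 2) = 0 := by
  simp [be_apply, Hgen, elm, Matrix.single, Matrix.smul_apply, Matrix.sub_apply, cs2, s2]
lemma beE0 : be (Egen 0) = -(1/2) := by
  have : ((2 * Complex.I)⁻¹).im = -(1/2) := by
    norm_num [Complex.inv_im]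
  simp [be_apply, Egen, elm, Matrix.single, Matrix.smul_apply, Matrix.add_apply, cs2, s2, this]
lemma beE2 : be (Egen 2) = 1/2 := by
  have : ((2 * Complex.I)⁻¹).im = -(1/2) := by
    norm_num [Complex.inv_im]
  simp [be_apply, Egen, elm, Matrix.single, Matrix.smul_apply, Matrix.add_apply, cs2, s2, this]
lemma beF0 : be (Fgen 0) = 0 := by
  simp [be_apply, Fgen, elm, Matrix.single, Matrix.smul_apply, Matrix.sub_apply, cs2, s2]
lemma beF2 : be (Fgen 2) = 0 := by
  simp [be_apply, Fgen, elm, Matrix.single, Matrix.smul_apply, Matrix.sub_apply, cs2, s2]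

lemma fmap_su2d {x : M4} (hx : x ∈ su2d) : fmap x = 0 := by
  have h : x ∈ LinearMap.ker al ⊓ LinearMap.ker be := by
    refine Submodule.span_le.2 ?_ hx
    rintro z hz
    simp only [Set.mem_insert_iff, Set.mem_singleton_iff] at hz
    rcases hz with rfl | rfl | rfl <;>
      refine Submodule.mem_inf.2 ⟨?_, ?_⟩ <;>
        simp [LinearMap.mem_ker, alH0, alH2, alE0, alE2, alF0, alF2,
          beH0, beH2, beE0, beE2, beF0, beF2]
  obtain ⟨h1, h2⟩ := Submodule.mem_inf.1 h
  rw [LinearMap.mem_ker] at h1 h2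
  rw [fmap_apply, h1, h2, zero_smul, zero_smul, add_zero]

noncomputable def Wd : Submodule ℝ (ExteriorAlgebra ℝ M4) :=
  Submodule.span ℝ {ω | ∃ x ∈ su2d, ∃ y : M4, y.conjTranspose = -y ∧ ω = wedge x y}

set_option synthInstance.maxHeartbeats 1000000 in
/-- For the standard coboundary cobracket `δ` of `u(4)` (with `δ(Hᵢ)=δ(H)=0`,
`δ(Eᵢ)=Eᵢ∧Hᵢ`, `δ(Fᵢ)=Fᵢ∧Hᵢ`), the diagonal `su(2)^d = span{H₁+H₃,E₁+E₃,F₁+F₃}`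
is not coisotropic: `δ(su(2)^d) ⊄ su(2)^d ∧ u(4)`. -/
theorem diagonal_su2_not_coisotropic
    (δ : M4 →ₗ[ℝ] ExteriorAlgebra ℝ M4)
    (hH : ∀ i, δ (Hgen i) = 0) (hHc : δ Hc = 0)
    (hE : ∀ i, δ (Egen i) = wedge (Egen i) (Hgen i))
    (hF : ∀ i, δ (Fgen i) = wedge (Fgen i) (Hgen i)) :
    ¬ (∀ x ∈ su2d, δ x ∈ Wd) := by
  intro h
  set Φ := ExteriorAlgebra.lift ℝ ⟨fmap, fmap_cond⟩ with hΦ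
  have wentry : ∀ x y : M4, Φ (wedge x y) = fmap x * fmap y := by
    intro x y
    rw [wedge, map_mul, hΦ, ExteriorAlgebra.lift_ι_apply, ExteriorAlgebra.lift_ι_apply]
  have hx : Egen 0 + Egen 2 ∈ su2d := by
    apply Submodule.subset_span
    simp only [Set.mem_insert_iff, Set.mem_singleton_iff]
    tauto
  have hW : ∀ ω ∈ Wd, (Φ ω) 0 3 = 0 := by
    intro ω hω
    refine Submodule.span_induction ?_ ?_ ?_ ?_ hω
    · rintro ω ⟨x, hx, y, -, rfl⟩
      rw [wentry, fmap_su2d hx, zero_mul, Matrix.zero_apply]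
    · simp
    · intro a b _ _ ha hb
      rw [map_add, Matrix.add_apply, ha, hb, add_zero]
    · intro r a _ ha
      rw [map_smul, Matrix.smul_apply, ha, smul_zero]
  have key := hW _ (h _ hx)
  rw [map_add, hE, hE, map_add, Matrix.add_apply, wentry, wentry,
    fmap_apply, fmap_apply, fmap_apply, fmap_apply,
    alE0, alE2, alH0, alH2, beE0, beE2, beH0, beH2] at key
  simp only [zero_smul, one_smul, neg_smul, smul_zero, add_zero, zero_add,
    neg_mul, mul_neg, smul_mul_assoc, mul_smul_comm,
    A1A1, A2A2, A1A2, A2A1] at key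
  simp only [Matrix.neg_apply, Matrix.smul_apply, elm, Matrix.single,
    Matrix.of_apply, if_pos (by decide : (0:Fin 4) = 0 ∧ (3:Fin 4) = 3)] at key
  norm_num at key

end
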